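/- Let X be a real Banach space with dim X ≥ 2, p > 1, F(x) = (1/p)‖x‖^p, j_p : X → X* a selection of the duality mapping, and let φ : [0,∞) → [0,∞) be nondecreasing with φ(τ) > 0 for τ > 0. Suppose (a): there exist C, c > 0 such that for all x ≠ 0 and all y ∈ X with ‖x−y‖ ≤ c‖x‖ one has Δ_F^{j_p(x)}(y,x) ≤ C‖x‖^p φ(‖x−y‖/‖x‖). Then (b): there exists C' > 0 such that for all x ≠ 0 and all y ∈ X, Δ^sym(x,y) ≤ C'·max{‖x‖,‖y‖}^p · φ(2‖x−y‖/max{‖x‖,‖y‖}); and consequently (c): there exists C'' > 0 such that for all x ≠ 0 and all y ∈ X, Δ_F^{j_p(x)}(y,x) ≤ C''·max{‖x‖,‖y‖}^p · φ(2‖x−y‖/max{‖x‖,‖y‖}). -/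

import Mathlib

open scoped ENNReal

/-- The modulus of smoothness of a normed space `Y`:
`ρ_Y(τ) = sup {(‖x+τy‖+‖x−τy‖)/2 − 1 : x, y ∈ S_Y}`. -/
noncomputable def rhoSpace (Y : Type*) [NormedAddCommGroup Y] [NormedSpace ℝ Y] (τ : ℝ) : ℝ :=
  sSup {r : ℝ | ∃ x y : Y, ‖x‖ = 1 ∧ ‖y‖ = 1 ∧ r = (‖x + τ • y‖ + ‖x - τ • y‖) / 2 - 1}

/-- The modulus of convexity of a normed space `Y`:
`δ_Y(ε) = inf {1 − ‖y+ỹ‖/2 : y, ỹ ∈ S_Y, ‖y−ỹ‖ = ε}`. -/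
noncomputable def deltaSpace (Y : Type*) [NormedAddCommGroup Y] [NormedSpace ℝ Y] (ε : ℝ) : ℝ :=
  sInf {r : ℝ | ∃ y z : Y, ‖y‖ = 1 ∧ ‖z‖ = 1 ∧ ‖y - z‖ = ε ∧ r = 1 - ‖y + z‖ / 2}

/-- `φ` is a subgradient of `F` at `x`: `F(y) ≥ F(x) + ⟨φ, y−x⟩` for all `y`. -/
def IsSubgradient {X : Type*} [NormedAddCommGroup X] [NormedSpace ℝ X]
    (F : X → ℝ) (x : X) (φ : X →L[ℝ] ℝ) : Prop :=
  ∀ y : X, F x + φ (y - x) ≤ F y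

/-- The linearization error (Bregman divergence)
`Δ_F^{φ}(y,x) = F(y) − F(x) − ⟨φ, y−x⟩`. -/
def breg {X : Type*} [NormedAddCommGroup X] [NormedSpace ℝ X]
    (F : X → ℝ) (φ : X →L[ℝ] ℝ) (y x : X) : ℝ :=
  F y - F x - φ (y - x)

/-- The modulus of smoothness of `F` at `x` w.r.t. `φ`, with values in `[0,∞]`:
`ρ_{F,x}^{φ}(τ) = sup {|Δ_F^{φ}(y,x)| : ‖y−x‖ = τ}`. -/
noncomputable def rhoF {X : Type*} [NormedAddCommGroup X] [NormedSpace ℝ X]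
    (F : X → ℝ) (x : X) (φ : X →L[ℝ] ℝ) (τ : ℝ) : ℝ≥0∞ :=
  ⨆ y ∈ {y : X | ‖y - x‖ = τ}, ENNReal.ofReal |breg F φ y x|

/-- The modulus of convexity of `F` at `x` w.r.t. `φ`, with values in `[0,∞]`:
`δ_{F,x}^{φ}(τ) = inf {|Δ_F^{φ}(y,x)| : ‖y−x‖ = τ}`. -/
noncomputable def deltaF {X : Type*} [NormedAddCommGroup X] [NormedSpace ℝ X]
    (F : X → ℝ) (x : X) (φ : X →L[ℝ] ℝ) (τ : ℝ) : ℝ≥0∞ :=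
  ⨅ y ∈ {y : X | ‖y - x‖ = τ}, ENNReal.ofReal |breg F φ y x|

/-- `jp` is a selection of the duality mapping with exponent `p`:
`⟨j_p(x), x⟩ = ‖j_p(x)‖·‖x‖` and `‖j_p(x)‖ = ‖x‖^{p−1}` for every `x`. -/
def IsDualitySelection {X : Type*} [NormedAddCommGroup X] [NormedSpace ℝ X]
    (p : ℝ) (jp : X → X →L[ℝ] ℝ) : Prop :=
  ∀ x : X, jp x x = ‖jp x‖ * ‖x‖ ∧ ‖jp x‖ = ‖x‖ ^ (p - 1)

lemma young_like (p : ℝ) (hp : 1 < p) (a b : ℝ) (ha : 0 ≤ a) (hb : 0 ≤ b) :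
    a ^ (p - 1) * b ≤ (1 - 1 / p) * a ^ p + (1 / p) * b ^ p := by
  have hq : (p / (p - 1)).HolderConjugate p := (Real.HolderConjugate.conjExponent hp).symm
  have h := Real.young_inequality_of_nonneg (Real.rpow_nonneg ha (p - 1)) hb hq
  have hp0 : (0:ℝ) < p := by linarith
  have hp1 : p - 1 ≠ 0 := sub_ne_zero.mpr (ne_of_gt hp)
  have hrw : (a ^ (p - 1)) ^ (p / (p - 1)) = a ^ p := by
    rw [← Real.rpow_mul ha]
    congr 1
    field_simp
  rw [hrw] at h
  have h2 : a ^ p / (p / (p - 1)) = (1 - 1 / p) * a ^ p := by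
    rw [div_div_eq_mul_div]
    field_simp
  rw [h2] at h
  have h3 : b ^ p / p = 1 / p * b ^ p := by ring
  linarith [h]

lemma rpow_pred_mul_self (p : ℝ) (hp : 1 < p) (a : ℝ) (ha : 0 ≤ a) :
    a ^ (p - 1) * a = a ^ p := by
  rcases eq_or_lt_of_le ha with h | h
  · rw [← h, Real.zero_rpow (by linarith : p - 1 ≠ 0),
      Real.zero_rpow (by positivity : p ≠ 0), zero_mul]
  · nth_rewrite 2 [← Real.rpow_one a]
    rw [← Real.rpow_add h]
    norm_num

lemma breg_nonneg' {X : Type*} [NormedAddCommGroup X] [NormedSpace ℝ X]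
    (p : ℝ) (hp : 1 < p) (jp : X → X →L[ℝ] ℝ) (hjp : IsDualitySelection p jp)
    (x y : X) : 0 ≤ breg (fun z : X => (1 / p) * ‖z‖ ^ p) (jp x) y x := by
  obtain ⟨h1, h2⟩ := hjp x
  have hyoung := young_like p hp ‖x‖ ‖y‖ (norm_nonneg x) (norm_nonneg y)
  have hb : (jp x) y ≤ ‖x‖ ^ (p - 1) * ‖y‖ := by
    calc (jp x) y ≤ ‖(jp x) y‖ := le_abs_self _
      _ ≤ ‖jp x‖ * ‖y‖ := (jp x).le_opNorm y
      _ = ‖x‖ ^ (p - 1) * ‖y‖ := by rw [h2]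
  have hxx : (jp x) x = ‖x‖ ^ p := by
    rw [h1, h2, rpow_pred_mul_self p hp _ (norm_nonneg x)]
  simp only [breg, map_sub, hxx]
  nlinarith [hyoung, hb]

set_option maxHeartbeats 1000000

/-- for `F = (1/p)‖·‖^p` and a nondecreasing `φ : [0,∞) → [0,∞)` positive on
`(0,∞)`, condition (a) implies (b) (bound on the symmetric Bregman divergence) and (c)
(uniform bound on the Bregman divergence). -/
theorem stmt14 (X : Type*) [NormedAddCommGroup X] [NormedSpace ℝ X] [CompleteSpace X]
    (hdim : 2 ≤ Module.rank ℝ X)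
    (p : ℝ) (hp : 1 < p)
    (jp : X → X →L[ℝ] ℝ) (hjp : IsDualitySelection p jp)
    (φ : ℝ → ℝ)
    (hφ0 : ∀ τ : ℝ, 0 ≤ τ → 0 ≤ φ τ)
    (hφmono : ∀ τ₁ τ₂ : ℝ, 0 ≤ τ₁ → τ₁ ≤ τ₂ → φ τ₁ ≤ φ τ₂)
    (hφpos : ∀ τ : ℝ, 0 < τ → 0 < φ τ)
    (ha : ∃ C c : ℝ, 0 < C ∧ 0 < c ∧
      ∀ x y : X, x ≠ 0 → ‖x - y‖ ≤ c * ‖x‖ →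
        breg (fun z : X => (1 / p) * ‖z‖ ^ p) (jp x) y x ≤
          C * ‖x‖ ^ p * φ (‖x - y‖ / ‖x‖)) :
    (∃ C' : ℝ, 0 < C' ∧ ∀ x y : X, x ≠ 0 →
      breg (fun z : X => (1 / p) * ‖z‖ ^ p) (jp x) y x +
          breg (fun z : X => (1 / p) * ‖z‖ ^ p) (jp y) x y ≤
        C' * max ‖x‖ ‖y‖ ^ p * φ (2 * ‖x - y‖ / max ‖x‖ ‖y‖)) ∧
    (∃ C'' : ℝ, 0 < C'' ∧ ∀ x y : X, x ≠ 0 →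
      breg (fun z : X => (1 / p) * ‖z‖ ^ p) (jp x) y x ≤
        C'' * max ‖x‖ ‖y‖ ^ p * φ (2 * ‖x - y‖ / max ‖x‖ ‖y‖)) := by
  obtain ⟨C, c, hC, hc, ha⟩ := ha
  have hp0 : (0:ℝ) < p := by linarith
  set t : ℝ := min (c / 2) (1 / 2) with ht_def
  have ht : 0 < t := lt_min (by linarith) (by norm_num)
  have htc : t ≤ c / 2 := min_le_left _ _
  have hth : t ≤ 1 / 2 := min_le_right _ _
  have hφt : 0 < φ (2 * t) := hφpos _ (by linarith)
  set C' : ℝ := max (2 * C) (4 / φ (2 * t)) with hC'_def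
  have hC'pos : 0 < C' := lt_of_lt_of_le (by linarith) (le_max_left _ _)
  have key : ∀ x y : X, x ≠ 0 →
      breg (fun z : X => (1 / p) * ‖z‖ ^ p) (jp x) y x +
          breg (fun z : X => (1 / p) * ‖z‖ ^ p) (jp y) x y ≤
        C' * max ‖x‖ ‖y‖ ^ p * φ (2 * ‖x - y‖ / max ‖x‖ ‖y‖) := by
    intro x y hx
    set M : ℝ := max ‖x‖ ‖y‖ with hM_def
    have hxpos : 0 < ‖x‖ := norm_pos_iff.mpr hx
    have hM : 0 < M := lt_of_lt_of_le hxpos (le_max_left _ _)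
    have hMp : 0 < M ^ p := Real.rpow_pos_of_pos hM p
    have hdnn : 0 ≤ 2 * ‖x - y‖ / M := by positivity
    have hφM : 0 ≤ φ (2 * ‖x - y‖ / M) := hφ0 _ hdnn
    by_cases hsmall : ‖x - y‖ ≤ t * M
    · -- small perturbation case
      have hfinal : ∀ b1 b2 : ℝ,
          b1 ≤ C * M ^ p * φ (2 * ‖x - y‖ / M) →
          b2 ≤ C * M ^ p * φ (2 * ‖x - y‖ / M) →
          b1 + b2 ≤ C' * M ^ p * φ (2 * ‖x - y‖ / M) := by
        intro b1 b2 h1 h2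
        have h2C : 2 * C ≤ C' := le_max_left _ _
        nlinarith [mul_nonneg hMp.le hφM, mul_le_mul_of_nonneg_right
          (mul_le_mul_of_nonneg_right h2C hMp.le) hφM]
      rcases le_total ‖y‖ ‖x‖ with hyx | hxy
      · have hMx : M = ‖x‖ := max_eq_left hyx
        have htM : t * M ≤ t * ‖x‖ := by rw [hMx]
        have hd1 : ‖x - y‖ ≤ c * ‖x‖ := by nlinarith
        have b1 := ha x y hx hd1
        have hy2 : ‖x‖ / 2 ≤ ‖y‖ := by
          have := norm_sub_norm_le x y
          nlinarith
        have hy : y ≠ 0 := norm_pos_iff.mp (by linarith)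
        have hd2 : ‖y - x‖ ≤ c * ‖y‖ := by
          rw [norm_sub_rev]; nlinarith
        have b2 := ha y x hy hd2
        have hypos : (0:ℝ) < ‖y‖ := by linarith
        have φ1 : φ (‖x - y‖ / ‖x‖) ≤ φ (2 * ‖x - y‖ / M) := by
          apply hφmono _ _ (by positivity)
          rw [hMx, div_le_div_iff₀ hxpos hxpos]
          nlinarith [norm_nonneg (x - y)]
        have φ2 : φ (‖y - x‖ / ‖y‖) ≤ φ (2 * ‖x - y‖ / M) := by
          apply hφmono _ _ (by positivity)
          rw [hMx, div_le_div_iff₀ hypos hxpos, norm_sub_rev]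
          nlinarith [norm_nonneg (x - y)]
        have nx : ‖x‖ ^ p ≤ M ^ p := by rw [hMx]
        have ny : ‖y‖ ^ p ≤ M ^ p :=
          Real.rpow_le_rpow (norm_nonneg y) (le_max_right _ _) hp0.le
        refine hfinal _ _ (le_trans b1 ?_) (le_trans b2 ?_)
        · exact mul_le_mul (mul_le_mul_of_nonneg_left nx hC.le) φ1
            (hφ0 _ (by positivity)) (by positivity)
        · exact mul_le_mul (mul_le_mul_of_nonneg_left ny hC.le) φ2
            (hφ0 _ (by positivity)) (by positivity)
      · have hMy : M = ‖y‖ := max_eq_right hxy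
        have hypos : (0:ℝ) < ‖y‖ := by linarith
        have hy : y ≠ 0 := norm_pos_iff.mp hypos
        have htM : t * M ≤ t * ‖y‖ := by rw [hMy]
        have hd2 : ‖y - x‖ ≤ c * ‖y‖ := by
          rw [norm_sub_rev]; nlinarith
        have b2 := ha y x hy hd2
        have hx2 : ‖y‖ / 2 ≤ ‖x‖ := by
          have := norm_sub_norm_le y x
          rw [norm_sub_rev] at this
          nlinarith
        have hd1 : ‖x - y‖ ≤ c * ‖x‖ := by nlinarith
        have b1 := ha x y hx hd1
        have φ1 : φ (‖x - y‖ / ‖x‖) ≤ φ (2 * ‖x - y‖ / M) := by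
          apply hφmono _ _ (by positivity)
          rw [hMy, div_le_div_iff₀ hxpos hypos]
          nlinarith [norm_nonneg (x - y)]
        have φ2 : φ (‖y - x‖ / ‖y‖) ≤ φ (2 * ‖x - y‖ / M) := by
          apply hφmono _ _ (by positivity)
          rw [hMy, div_le_div_iff₀ hypos hypos, norm_sub_rev]
          nlinarith [norm_nonneg (x - y)]
        have nx : ‖x‖ ^ p ≤ M ^ p :=
          Real.rpow_le_rpow (norm_nonneg x) (le_max_left _ _) hp0.le
        have ny : ‖y‖ ^ p ≤ M ^ p := by rw [hMy]
        refine hfinal _ _ (le_trans b1 ?_) (le_trans b2 ?_)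
        · exact mul_le_mul (mul_le_mul_of_nonneg_left nx hC.le) φ1
            (hφ0 _ (by positivity)) (by positivity)
        · exact mul_le_mul (mul_le_mul_of_nonneg_left ny hC.le) φ2
            (hφ0 _ (by positivity)) (by positivity)
    · -- large perturbation case
      push_neg at hsmall
      have hsum : breg (fun z : X => (1 / p) * ‖z‖ ^ p) (jp x) y x +
          breg (fun z : X => (1 / p) * ‖z‖ ^ p) (jp y) x y =
          ((jp x) x - (jp x) y) + ((jp y) y - (jp y) x) := by
        simp only [breg, map_sub]; ring
      have hMpred : 0 ≤ M ^ (p - 1) := Real.rpow_nonneg hM.le _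
      have hx1 : (jp x) x - (jp x) y ≤ M ^ (p - 1) * ‖x - y‖ := by
        have hb : ‖x‖ ^ (p - 1) ≤ M ^ (p - 1) :=
          Real.rpow_le_rpow (norm_nonneg x) (le_max_left _ _) (by linarith)
        calc (jp x) x - (jp x) y = (jp x) (x - y) := by rw [map_sub]
          _ ≤ ‖(jp x) (x - y)‖ := le_abs_self _
          _ ≤ ‖jp x‖ * ‖x - y‖ := (jp x).le_opNorm _
          _ = ‖x‖ ^ (p - 1) * ‖x - y‖ := by rw [(hjp x).2]
          _ ≤ M ^ (p - 1) * ‖x - y‖ :=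
            mul_le_mul_of_nonneg_right hb (norm_nonneg _)
      have hy1 : (jp y) y - (jp y) x ≤ M ^ (p - 1) * ‖x - y‖ := by
        have hb : ‖y‖ ^ (p - 1) ≤ M ^ (p - 1) :=
          Real.rpow_le_rpow (norm_nonneg y) (le_max_right _ _) (by linarith)
        calc (jp y) y - (jp y) x = (jp y) (y - x) := by rw [map_sub]
          _ ≤ ‖(jp y) (y - x)‖ := le_abs_self _
          _ ≤ ‖jp y‖ * ‖y - x‖ := (jp y).le_opNorm _
          _ = ‖y‖ ^ (p - 1) * ‖x - y‖ := by rw [(hjp y).2, norm_sub_rev]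
          _ ≤ M ^ (p - 1) * ‖x - y‖ :=
            mul_le_mul_of_nonneg_right hb (norm_nonneg _)
      have hxy2M : ‖x - y‖ ≤ 2 * M := by
        have := norm_sub_le x y
        have h1 : ‖x‖ ≤ M := le_max_left _ _
        have h2 : ‖y‖ ≤ M := le_max_right _ _
        linarith
      have hMM : M ^ (p - 1) * M = M ^ p := rpow_pred_mul_self p hp M hM.le
      have hbound : breg (fun z : X => (1 / p) * ‖z‖ ^ p) (jp x) y x +
          breg (fun z : X => (1 / p) * ‖z‖ ^ p) (jp y) x y ≤ 4 * M ^ p := by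
        rw [hsum, ← hMM]
        nlinarith [norm_nonneg (x - y)]
      have hφlb : φ (2 * t) ≤ φ (2 * ‖x - y‖ / M) := by
        apply hφmono _ _ (by linarith)
        rw [le_div_iff₀ hM]
        nlinarith
      have h4 : 4 * M ^ p ≤ C' * M ^ p * φ (2 * ‖x - y‖ / M) := by
        have e : 4 / φ (2 * t) * M ^ p * φ (2 * t) = 4 * M ^ p := by
          field_simp
        calc 4 * M ^ p = 4 / φ (2 * t) * M ^ p * φ (2 * t) := e.symm
          _ ≤ 4 / φ (2 * t) * M ^ p * φ (2 * ‖x - y‖ / M) :=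
            mul_le_mul_of_nonneg_left hφlb
              (mul_nonneg (by positivity) hMp.le)
          _ ≤ C' * M ^ p * φ (2 * ‖x - y‖ / M) :=
            mul_le_mul_of_nonneg_right
              (mul_le_mul_of_nonneg_right (le_max_right _ _) hMp.le) hφM
      linarith
  constructor
  · exact ⟨C', hC'pos, key⟩
  · refine ⟨C', hC'pos, fun x y hx => ?_⟩
    have hnn := breg_nonneg' p hp jp hjp y x
    linarith [key x y hx]
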